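/- Let k be a field, and let P be a property of subsets of End_k(V) (one for each k-vector space V) that is inherited by quotients, i.e., whenever W ⊆ V are k-vector spaces and X ⊆ End_k(V) satisfies P and X(W) ⊆ W, the induced set X̄ ⊆ End_k(V/W) of maps v + W ↦ T(v) + W (T ∈ X) also satisfies P. Suppose that for every nonzero k-vector space V and every X ⊆ End_k(V) satisfying P there exists a 1-dimensional X-invariant subspace of V. Then for every k-vector space V, every subset of End_k(V) satisfying P is triangularizable. -/

import Mathlib

universe u

section aux
variable {k : Type u} [Field k] {V : Type u} [AddCommGroup V] [Module k V]

noncomputable def pickVec (X : Set (Module.End k V)) (W : Submodule k V) : V :=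
  letI := Classical.propDecidable (∃ u : V, u ∉ W ∧ ∀ T ∈ X, T u ∈ W ⊔ (k ∙ u))
  if h : (∃ u : V, u ∉ W ∧ ∀ T ∈ X, T u ∈ W ⊔ (k ∙ u)) then h.choose else 0

lemma pickVec_spec {X : Set (Module.End k V)} {W : Submodule k V}
    (h : ∃ u : V, u ∉ W ∧ ∀ T ∈ X, T u ∈ W ⊔ (k ∙ u)) :
    pickVec X W ∉ W ∧ ∀ T ∈ X, T (pickVec X W) ∈ W ⊔ (k ∙ pickVec X W) := by
  rw [pickVec, dif_pos h]; exact h.choose_spec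

noncomputable def triVec (X : Set (Module.End k V)) (α : Ordinal.{u}) : V :=
  pickVec X (Submodule.span k {x | ∃ β, ∃ _ : β < α, triVec X β = x})
termination_by α

noncomputable def triW (X : Set (Module.End k V)) (α : Ordinal.{u}) : Submodule k V :=
  Submodule.span k {x | ∃ β, ∃ _ : β < α, triVec X β = x}

lemma triVec_eq (X : Set (Module.End k V)) (α : Ordinal.{u}) :
    triVec X α = pickVec X (triW X α) := by
  rw [triVec]; rfl

lemma triW_mono (X : Set (Module.End k V)) {α α' : Ordinal.{u}} (h : α ≤ α') :
    triW X α ≤ triW X α' :=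
  Submodule.span_mono (fun _ ⟨β, hβ, hx⟩ => ⟨β, lt_of_lt_of_le hβ h, hx⟩)

lemma triVec_mem_triW (X : Set (Module.End k V)) {β α : Ordinal.{u}} (h : β < α) :
    triVec X β ∈ triW X α :=
  Submodule.subset_span ⟨β, h, rfl⟩

lemma linearIndependent_of_not_mem_span_iio {ι : Type*} [LinearOrder ι] {v : ι → V}
    (h : ∀ i, v i ∉ Submodule.span k (v '' Set.Iio i)) : LinearIndependent k v := by
  rw [linearIndependent_iff']
  intro s g hg i hi
  by_contra hgi
  classical
  set t := s.filter (fun j => g j ≠ 0) with ht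
  have hit : i ∈ t := Finset.mem_filter.2 ⟨hi, hgi⟩
  have htne : t.Nonempty := ⟨i, hit⟩
  set m := t.max' htne with hm
  have hmt : m ∈ t := t.max'_mem htne
  have hgm : g m ≠ 0 := (Finset.mem_filter.1 hmt).2
  have hsum : ∑ j ∈ t, g j • v j = 0 := by
    rw [ht, Finset.sum_filter_of_ne, hg]
    intro j _ hj hgj
    exact hj (by rw [hgj, zero_smul])
  have hmem : ∑ j ∈ t.erase m, g j • v j ∈ Submodule.span k (v '' Set.Iio m) := by
    refine Submodule.sum_mem _ fun j hj => Submodule.smul_mem _ _ (Submodule.subset_span ?_)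
    refine ⟨j, ?_, rfl⟩
    have hjm : j ≠ m := (Finset.mem_erase.1 hj).1
    exact lt_of_le_of_ne (t.le_max' j (Finset.mem_erase.1 hj).2) hjm
  have heq : g m • v m = -∑ j ∈ t.erase m, g j • v j := by
    have h5 := Finset.add_sum_erase t (fun j => g j • v j) hmt
    rw [hsum] at h5
    rw [eq_neg_iff_add_eq_zero]
    exact h5
  have : v m ∈ Submodule.span k (v '' Set.Iio m) := by
    have hv : v m = (g m)⁻¹ • (g m • v m) := by
      rw [smul_smul, inv_mul_cancel₀ hgm, one_smul]
    rw [hv, heq]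
    exact Submodule.smul_mem _ _ (Submodule.neg_mem _ hmem)
  exact h m this

lemma exists_pick_aux (X : Set (Module.End k V)) (W : Submodule k V)
    (hW : ∀ T ∈ X, ∀ w ∈ W, T w ∈ W)
    (hU : ∃ U : Submodule k (V ⧸ W), Module.finrank k ↥U = 1 ∧
      ∀ S ∈ {S : Module.End k (V ⧸ W) | ∃ T ∈ X,
        ∀ v : V, S (Submodule.Quotient.mk v) = Submodule.Quotient.mk (T v)},
      ∀ u ∈ U, S u ∈ U) :
    ∃ u : V, u ∉ W ∧ ∀ T ∈ X, T u ∈ W ⊔ (k ∙ u) := by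
  obtain ⟨U, hU1, hUinv⟩ := hU
  obtain ⟨v0, hv0ne, hv0span⟩ := (finrank_eq_one_iff' (K := k) (V := ↥U)).1 hU1
  obtain ⟨u, hu⟩ := Submodule.Quotient.mk_surjective W (v0 : V ⧸ W)
  refine ⟨u, ?_, ?_⟩
  · intro huW
    have h0 : (v0 : V ⧸ W) = 0 := by
      rw [← hu]; exact (Submodule.Quotient.mk_eq_zero W).2 huW
    exact hv0ne (Subtype.ext h0)
  · intro T hT
    have hle : W ≤ W.comap T := fun w hw => hW T hT w hw
    set S : Module.End k (V ⧸ W) := Submodule.mapQ W W T hle with hSdef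
    have hSap : ∀ v : V, S (Submodule.Quotient.mk v) = Submodule.Quotient.mk (T v) :=
      fun v => Submodule.mapQ_apply W W T (h := hle) v
    have hS1 : S ((v0 : V ⧸ W)) ∈ U := hUinv S ⟨T, hT, hSap⟩ _ v0.2
    obtain ⟨c, hc⟩ := hv0span ⟨S (v0 : V ⧸ W), hS1⟩
    have hc' : c • (v0 : V ⧸ W) = S (v0 : V ⧸ W) := congrArg Subtype.val hc
    have h2 : Submodule.Quotient.mk (p := W) (T u) = Submodule.Quotient.mk (c • u) := by
      rw [← hSap, hu, Submodule.Quotient.mk_smul, hu, hc']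
    have h3 : T u - c • u ∈ W := (Submodule.Quotient.eq W).1 h2
    have h4 : T u = (T u - c • u) + c • u := by abel
    rw [h4]
    exact Submodule.add_mem _ (Submodule.mem_sup_left h3)
      (Submodule.mem_sup_right (Submodule.smul_mem _ _ (Submodule.mem_span_singleton_self u)))

end aux

/-- Triangularization Lemma: if `P` is a property of subsets of `End_k(V)`
(one for each `k`-vector space `V`) that is inherited by quotients, and every subset
satisfying `P` of the endomorphism ring of a nonzero vector space admits a 1-dimensional
invariant subspace, then every subset satisfying `P` is triangularizable. -/
theorem stmt_1 {k : Type u} [Field k]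
    (P : (V : Type u) → [inst : AddCommGroup V] → [inst2 : Module k V] →
      Set (Module.End k V) → Prop)
    (hquot : ∀ (V : Type u) [AddCommGroup V] [Module k V]
      (X : Set (Module.End k V)) (W : Submodule k V), P V X →
      (∀ T ∈ X, ∀ w ∈ W, T w ∈ W) →
      P (V ⧸ W) {S : Module.End k (V ⧸ W) | ∃ T ∈ X,
        ∀ v : V, S (Submodule.Quotient.mk v) = Submodule.Quotient.mk (T v)})
    (hone : ∀ (V : Type u) [AddCommGroup V] [Module k V], Nontrivial V →
      ∀ X : Set (Module.End k V), P V X →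
      ∃ U : Submodule k V, Module.finrank k ↥U = 1 ∧ ∀ T ∈ X, ∀ u ∈ U, T u ∈ U)
    (V : Type u) [AddCommGroup V] [Module k V] (X : Set (Module.End k V)) (hX : P V X) :
    ∃ (ι : Type u) (lo : LinearOrder ι), WellFounded lo.lt ∧
      ∃ b : Module.Basis ι k V, ∀ T ∈ X, ∀ i : ι,
        T (b i) ∈ Submodule.span k (⇑b '' {j | lo.le j i}) := by
  classical
  -- key: the existential needed by `pickVec` holds for invariant proper submodules
  have exists_pick : ∀ W : Submodule k V, (∀ T ∈ X, ∀ w ∈ W, T w ∈ W) → W ≠ ⊤ →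
      ∃ u : V, u ∉ W ∧ ∀ T ∈ X, T u ∈ W ⊔ (k ∙ u) := by
    intro W hW hWtop
    haveI := (Submodule.Quotient.nontrivial_iff (p := W)).2 hWtop
    exact exists_pick_aux X W hW
      (hone (V ⧸ W) inferInstance _ (hquot V X W hX hW))
  -- each triW is invariant
  have key : ∀ α : Ordinal.{u}, ∀ T ∈ X, ∀ w ∈ triW X α, T w ∈ triW X α := by
    intro α
    induction α using Ordinal.induction with
    | _ α ih =>
      intro T hT w hw
      have hsub : {x | ∃ β, ∃ _ : β < α, triVec X β = x} ⊆
          ((triW X α).comap (T : V →ₗ[k] V) : Set V) := by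
        rintro x ⟨β, hβ, rfl⟩
        by_cases hβtop : triW X β = ⊤
        · have htop : triW X α = ⊤ := top_le_iff.1 (hβtop ▸ triW_mono X hβ.le)
          simp [Submodule.mem_comap, htop]
        · have hspec := pickVec_spec (exists_pick (triW X β) (ih β hβ) hβtop)
          rw [← triVec_eq] at hspec
          have h1 : T (triVec X β) ∈ triW X β ⊔ (k ∙ triVec X β) := hspec.2 T hT
          have h2 : triW X β ⊔ (k ∙ triVec X β) ≤ triW X α :=
            sup_le (triW_mono X hβ.le)
              ((Submodule.span_singleton_le_iff_mem _ _).2 (triVec_mem_triW X hβ))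
          exact h2 h1
      exact Submodule.span_le.2 hsub hw
  -- spec of triVec at proper stages
  have pick_spec : ∀ α : Ordinal.{u}, triW X α ≠ ⊤ →
      triVec X α ∉ triW X α ∧ ∀ T ∈ X, T (triVec X α) ∈ triW X α ⊔ (k ∙ triVec X α) := by
    intro α hα
    rw [triVec_eq]
    exact pickVec_spec (exists_pick _ (key α) hα)
  -- the process terminates
  have hex : {α : Ordinal.{u} | triW X α = ⊤}.Nonempty := by
    by_contra h
    push_neg at h
    simp only [Set.not_nonempty_iff_eq_empty, Set.eq_empty_iff_forall_notMem,
      Set.mem_setOf_eq] at h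
    have hsm : StrictMono (triW X) := by
      intro a b hab
      refine lt_of_le_of_ne (triW_mono X hab.le) fun heq => ?_
      exact (pick_spec a (h a)).1 (heq ▸ triVec_mem_triW X hab)
    exact not_small_ordinal.{u} (small_of_injective hsm.injective)
  set δ := sInf {α : Ordinal.{u} | triW X α = ⊤} with hδdef
  have hδtop : triW X δ = ⊤ := csInf_mem hex
  have hδmin : ∀ β < δ, triW X β ≠ ⊤ := fun β hβ habs => (not_lt.2 (csInf_le' (show β ∈ {α : Ordinal.{u} | triW X α = ⊤} from habs))) hβ
  -- index type
  refine ⟨δ.ToType, inferInstance, (inferInstance : WellFoundedLT δ.ToType).wf, ?_⟩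
  set e : δ.ToType → Ordinal.{u} := fun i => @Ordinal.typein δ.ToType (· < ·) isWellOrder_lt i with he
  have helt : ∀ i, e i < δ := fun i => Ordinal.typein_lt_self i
  have hesurj : ∀ β < δ, ∃ i, e i = β := by
    intro β hβ
    have hβ' : β < @Ordinal.type δ.ToType (· < ·) isWellOrder_lt := by
      rwa [Ordinal.type_toType]
    exact @Ordinal.typein_surj δ.ToType (· < ·) isWellOrder_lt β hβ'
  have heltlt : ∀ {i j : δ.ToType}, e i < e j ↔ i < j := by
    intro i j
    exact @Ordinal.typein_lt_typein δ.ToType (· < ·) isWellOrder_lt i j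
  set w : δ.ToType → V := fun i => triVec X (e i) with hw
  -- the family spans
  have hrange : Submodule.span k (Set.range w) = ⊤ := by
    rw [← hδtop]
    apply le_antisymm
    · rw [Submodule.span_le]
      rintro x ⟨i, rfl⟩
      exact triVec_mem_triW X (helt i)
    · rw [triW, Submodule.span_le]
      rintro x ⟨β, hβ, rfl⟩
      obtain ⟨i, rfl⟩ := hesurj β hβ
      exact Submodule.subset_span ⟨i, rfl⟩
  -- the family is linearly independent
  have hind : LinearIndependent k w := by
    apply linearIndependent_of_not_mem_span_iio
    intro i hmem
    refine (pick_spec (e i) (hδmin _ (helt i))).1 ?_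
    refine Submodule.span_le.2 ?_ hmem
    rintro x ⟨j, hj, rfl⟩
    exact triVec_mem_triW X (heltlt.2 hj)
  set b : Module.Basis δ.ToType k V := Module.Basis.mk hind (by rw [hrange]) with hb
  refine ⟨b, ?_⟩
  intro T hT i
  have hbi : ∀ j, b j = w j := fun j => by rw [hb, Module.Basis.mk_apply]
  rw [hbi]
  have h1 : T (w i) ∈ triW X (e i) ⊔ (k ∙ triVec X (e i)) :=
    (pick_spec (e i) (hδmin _ (helt i))).2 T hT
  have h2 : triW X (e i) ⊔ (k ∙ triVec X (e i)) ≤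
      Submodule.span k (⇑b '' {j | j ≤ i}) := by
    refine sup_le ?_ ?_
    · rw [triW, Submodule.span_le]
      rintro x ⟨γ, hγ, rfl⟩
      obtain ⟨j, rfl⟩ := hesurj γ (hγ.trans (helt i))
      refine Submodule.subset_span ⟨j, le_of_lt (heltlt.1 hγ), ?_⟩
      rw [hbi]
    · rw [Submodule.span_singleton_le_iff_mem]
      refine Submodule.subset_span ⟨i, (by exact le_refl i), ?_⟩
      rw [hbi]
  exact h2 h1
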